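/- The diameter of the cyclic Kautz digraph CK(d,3) with d ≥ 3 is 5 = 2ℓ−1. -/
import Mathlib


/-- Vertex of `CK(d,3)`: a triple with `x₁ ≠ x₂`, `x₂ ≠ x₃`, `x₁ ≠ x₃`. -/
abbrev ck3Vert {n : ℕ} (x : Fin 3 → Fin n) : Prop :=
  x 0 ≠ x 1 ∧ x 1 ≠ x 2 ∧ x 0 ≠ x 2

/-- Arc of `CK(d,3)`: `x₁x₂x₃ → x₂x₃y` with `y ≠ x₂, x₃`. -/
abbrev ck3Adj {n : ℕ} (x y : Fin 3 → Fin n) : Prop :=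
  y 0 = x 1 ∧ y 1 = x 2 ∧ y 2 ≠ x 1 ∧ y 2 ≠ x 2

/-- A walk of length `k` in `CK(d,3)` from `u` to `v`. -/
abbrev ck3Walk {n : ℕ} (k : ℕ) (u v : Fin 3 → Fin n) : Prop :=
  ∃ w : Fin (k + 1) → Fin 3 → Fin n, w 0 = u ∧ w (Fin.last k) = v ∧
    (∀ i, ck3Vert (w i)) ∧ ∀ i j : Fin (k + 1), j.val = i.val + 1 → ck3Adj (w i) (w j)

lemma exists_ne3 {d : ℕ} (hd : 3 ≤ d) (u v w : Fin (d + 1)) :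
    ∃ t : Fin (d + 1), t ≠ u ∧ t ≠ v ∧ t ≠ w := by
  by_contra h
  push_neg at h
  have hsub : (Finset.univ : Finset (Fin (d + 1))) ⊆ {u, v, w} := by
    intro t _
    simp only [Finset.mem_insert, Finset.mem_singleton]
    by_contra ht
    push_neg at ht
    exact ht.2.2 (h t ht.1 ht.2.1)
  have h1 := Finset.card_le_card hsub
  have h2 : ({u, v, w} : Finset (Fin (d + 1))).card ≤ 3 := by
    refine le_trans (Finset.card_insert_le _ _) ?_
    have := Finset.card_insert_le v ({w} : Finset (Fin (d + 1)))
    simp at this ⊢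
    omega
  simp [Finset.card_univ] at h1
  omega

lemma ck3Walk_of_seq {n k : ℕ} {x y : Fin 3 → Fin n} (s : ℕ → Fin n)
    (h1 : ∀ i, i < k + 2 → s i ≠ s (i + 1))
    (h2 : ∀ i, i < k + 1 → s i ≠ s (i + 2))
    (hx : ∀ t : Fin 3, s t.val = x t)
    (hy : ∀ t : Fin 3, s (k + t.val) = y t) :
    ck3Walk k x y := by
  refine ⟨fun i t => s (i.val + t.val), ?_, ?_, ?_, ?_⟩
  · funext t; simpa using hx t
  · funext t; simpa using hy t
  · intro i
    refine ⟨?_, ?_, ?_⟩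
    · simpa using h1 i.val (by omega)
    · have := h1 (i.val + 1) (by omega)
      simpa using this
    · simpa using h2 i.val (by omega)
  · intro i j hj
    refine ⟨?_, ?_, ?_, ?_⟩
    · show s (j.val + 0) = s (i.val + 1); rw [hj]
    · show s (j.val + 1) = s (i.val + 2); rw [hj]
    · show s (j.val + 2) ≠ s (i.val + 1)
      rw [hj]
      exact (h2 (i.val + 1) (by omega)).symm
    · show s (j.val + 2) ≠ s (i.val + 2)
      rw [hj]
      exact (h1 (i.val + 2) (by omega)).symm

/-- The diameter of `CK(d,3)` with `d ≥ 3` is `5 = 2ℓ−1`: every ordered pair of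
vertices is joined by a walk of length at most `5`, and some ordered pair of vertices
is joined by no walk of length less than `5`. -/
theorem stmt15 (d : ℕ) (hd : 3 ≤ d) :
    (∀ x y : Fin 3 → Fin (d + 1), ck3Vert x → ck3Vert y →
      ∃ k ≤ 5, ck3Walk k x y) ∧
    ∃ x y : Fin 3 → Fin (d + 1), ck3Vert x ∧ ck3Vert y ∧
      ∀ k < 5, ¬ ck3Walk k x y := by
  constructor
  · rintro x y ⟨hab, hbc, hac⟩ ⟨hpq, hqr, hpr⟩
    by_cases hpc : y 0 = x 2
    · -- p = c : walk of length 5 via t1 ∉ {b,c,q}, t2 ∉ {t1,c,q}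
      obtain ⟨t1, ht1b, ht1c, ht1q⟩ := exists_ne3 hd (x 1) (x 2) (y 1)
      obtain ⟨t2, ht2t1, ht2c, ht2q⟩ := exists_ne3 hd t1 (x 2) (y 1)
      refine ⟨5, by norm_num, ck3Walk_of_seq
        (fun i => [x 0, x 1, x 2, t1, t2, y 0, y 1, y 2].getD i (x 0)) ?_ ?_ ?_ ?_⟩
      · intro i hi
        interval_cases i <;> simp_all [hpc, ne_comm]
      · intro i hi
        interval_cases i <;> simp_all [hpc, ne_comm]
      · intro t; fin_cases t <;> simp
      · intro t; fin_cases t <;> simp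
    · by_cases hqc : y 1 = x 2
      · -- q = c, p ≠ c : t1 ∉ {b,c,p}, t2 ∉ {t1,c,p}
        obtain ⟨t1, ht1b, ht1c, ht1p⟩ := exists_ne3 hd (x 1) (x 2) (y 0)
        obtain ⟨t2, ht2t1, ht2c, ht2p⟩ := exists_ne3 hd t1 (x 2) (y 0)
        refine ⟨5, by norm_num, ck3Walk_of_seq
          (fun i => [x 0, x 1, x 2, t1, t2, y 0, y 1, y 2].getD i (x 0)) ?_ ?_ ?_ ?_⟩
        · intro i hi
          interval_cases i <;> simp_all [hqc, ne_comm]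
        · intro i hi
          interval_cases i <;> simp_all [hqc, ne_comm]
        · intro t; fin_cases t <;> simp
        · intro t; fin_cases t <;> simp
      · by_cases hpb : y 0 = x 1
        · -- p = b, p ≠ c, q ≠ c : t1 = q, t2 ∉ {q,c,b}
          obtain ⟨t2, ht2q, ht2c, ht2b⟩ := exists_ne3 hd (y 1) (x 2) (x 1)
          refine ⟨5, by norm_num, ck3Walk_of_seq
            (fun i => [x 0, x 1, x 2, y 1, t2, y 0, y 1, y 2].getD i (x 0)) ?_ ?_ ?_ ?_⟩
          · intro i hi
            interval_cases i <;> simp_all [hpb, ne_comm]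
          · intro i hi
            interval_cases i <;> simp_all [hpb, ne_comm]
          · intro t; fin_cases t <;> simp
          · intro t; fin_cases t <;> simp
        · -- p ≠ b, p ≠ c, q ≠ c : length 3
          refine ⟨3, by norm_num, ck3Walk_of_seq
            (fun i => [x 0, x 1, x 2, y 0, y 1, y 2].getD i (x 0)) ?_ ?_ ?_ ?_⟩
          · intro i hi
            interval_cases i <;> simp_all [ne_comm]
          · intro i hi
            interval_cases i <;> simp_all [ne_comm]
          · intro t; fin_cases t <;> simp
          · intro t; fin_cases t <;> simp
  · refine ⟨![⟨0, by omega⟩, ⟨1, by omega⟩, ⟨2, by omega⟩],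
      ![⟨2, by omega⟩, ⟨1, by omega⟩, ⟨0, by omega⟩], ?_, ?_, ?_⟩
    · refine ⟨?_, ?_, ?_⟩ <;> simp [Fin.ext_iff]
    · refine ⟨?_, ?_, ?_⟩ <;> simp [Fin.ext_iff]
    · intro k hk
      interval_cases k
      · rintro ⟨w, h0, hl, -, -⟩
        have h : w 0 = w (Fin.last 0) := rfl
        rw [h0, hl] at h
        have := congrFun h 0
        simp [Fin.ext_iff] at this
      · rintro ⟨w, h0, hl, -, ha⟩
        have h := (ha 0 (Fin.last 1) rfl).1
        rw [hl, h0] at h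
        simp [Fin.ext_iff] at h
      · rintro ⟨w, h0, hl, -, ha⟩
        have h1 := (ha 0 1 rfl).2.2.1
        have h2 := (ha 1 (Fin.last 2) rfl).2.1
        rw [h0] at h1
        rw [hl] at h2
        rw [← h2] at h1
        simp [Fin.ext_iff] at h1
      · rintro ⟨w, h0, hl, -, ha⟩
        have h1 := (ha 0 1 rfl).2.2.2
        have h2 := (ha 1 2 rfl).2.1
        have h3 := (ha 2 (Fin.last 3) rfl).1
        rw [h0] at h1
        rw [hl] at h3
        rw [← h2, ← h3] at h1
        simp [Fin.ext_iff] at h1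
      · rintro ⟨w, h0, hl, -, ha⟩
        have h1 := (ha 0 1 rfl).2.1
        have h2 := (ha 1 2 rfl).2.2.1
        have h3 := (ha 2 3 rfl).2.1
        have h4 := (ha 3 (Fin.last 4) rfl).1
        rw [h0] at h1
        rw [hl] at h4
        rw [h1, ← h3, ← h4] at h2
        simp [Fin.ext_iff] at h2
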